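/- Let (F,σ) be a difference field of characteristic 0 and let α ∈ F with α ≠ 0. Let F[t,t⁻¹] be the P-extension of (F,σ) with σ(t) = α·t, and let F(t) be the field of rational functions in t over F equipped with the unique field automorphism extending σ with σ(t) = α·t. Then const(F[t,t⁻¹],σ) = const(F,σ) if and only if const(F(t),σ) = const(F,σ). -/

import Mathlib

open Polynomial

noncomputable def sp {F : Type*} [Field F] (σ : F ≃+* F) (α : F) :
    Polynomial F →+* Polynomial F :=
  (Polynomial.eval₂RingHom Polynomial.C (Polynomial.C α * Polynomial.X)).comp
    (Polynomial.mapRingHom (σ : F →+* F))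

lemma sp_monomial {F : Type*} [Field F] (σ : F ≃+* F) (α : F) (n : ℕ) (a : F) :
    sp σ α (Polynomial.monomial n a) = Polynomial.monomial n (σ a * α ^ n) := by
  rw [← Polynomial.C_mul_X_pow_eq_monomial, ← Polynomial.C_mul_X_pow_eq_monomial]
  simp only [sp, RingHom.coe_comp, Function.comp_apply, Polynomial.coe_mapRingHom,
    Polynomial.map_mul, Polynomial.map_pow, Polynomial.map_C, Polynomial.map_X,
    Polynomial.coe_eval₂RingHom, Polynomial.eval₂_mul, Polynomial.eval₂_pow,
    Polynomial.eval₂_C, Polynomial.eval₂_X, mul_pow, ← Polynomial.C_pow, RingHom.coe_coe]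
  rw [Polynomial.C_mul]; ring

lemma sp_coeff {F : Type*} [Field F] (σ : F ≃+* F) (α : F) (p : Polynomial F) (k : ℕ) :
    (sp σ α p).coeff k = σ (p.coeff k) * α ^ k := by
  induction p using Polynomial.induction_on' with
  | add p q hp hq => simp [map_add, hp, hq, add_mul]
  | monomial n a =>
      rw [sp_monomial]
      simp only [Polynomial.coeff_monomial]
      split <;> simp [*]

lemma sp_injective {F : Type*} [Field F] (σ : F ≃+* F) (α : F) (hα : α ≠ 0) :
    Function.Injective (sp σ α) := by
  intro p q h
  ext k
  have := congrArg (fun r => Polynomial.coeff r k) h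
  simp only [sp_coeff] at this
  have h2 := mul_right_cancel₀ (pow_ne_zero k hα) this
  exact σ.injective h2

open LaurentPolynomial in
lemma sl_T_nat {F : Type*} [Field F] (σ : F ≃+* F) (α : F)
    (σl : LaurentPolynomial F ≃+* LaurentPolynomial F)
    (hlT : σl (T 1) = LaurentPolynomial.C α * T 1) (n : ℕ) :
    σl (T (n : ℤ)) = LaurentPolynomial.C (α ^ n) * T (n : ℤ) := by
  induction n with
  | zero => simp [T_zero, map_one]
  | succ n ih =>
      push_cast
      rw [T_add, map_mul, ih, hlT, pow_succ, map_mul]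
      ring

open LaurentPolynomial in
lemma sl_T {F : Type*} [Field F] (σ : F ≃+* F) (α : F) (hα : α ≠ 0)
    (σl : LaurentPolynomial F ≃+* LaurentPolynomial F)
    (hlT : σl (T 1) = LaurentPolynomial.C α * T 1) (n : ℤ) :
    σl (T n) = LaurentPolynomial.C (α ^ n) * T n := by
  obtain ⟨m, rfl | rfl⟩ := n.eq_nat_or_neg
  · rw [sl_T_nat σ α σl hlT m, zpow_natCast]
  · have h1 : σl (T (m : ℤ)) * σl (T (-(m : ℤ))) = 1 := by
      rw [← map_mul, ← T_add, add_neg_cancel, T_zero, map_one]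
    have h2 : σl (T (m : ℤ)) * (LaurentPolynomial.C (α ^ (-(m : ℤ))) * T (-(m : ℤ))) = 1 := by
      rw [sl_T_nat σ α σl hlT m, mul_mul_mul_comm, ← map_mul, ← T_add,
        add_neg_cancel, T_zero, mul_one]
      rw [← zpow_natCast α m, ← zpow_add₀ hα, add_neg_cancel, zpow_zero, map_one]
    calc σl (T (-(m : ℤ)))
        = σl (T (-(m : ℤ))) * (σl (T (m : ℤ)) * (LaurentPolynomial.C (α ^ (-(m : ℤ))) * T (-(m : ℤ)))) := by
          rw [h2, mul_one]
      _ = (σl (T (m : ℤ)) * σl (T (-(m : ℤ)))) * (LaurentPolynomial.C (α ^ (-(m : ℤ))) * T (-(m : ℤ))) := by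
          ring
      _ = LaurentPolynomial.C (α ^ (-(m : ℤ))) * T (-(m : ℤ)) := by rw [h1, one_mul]

open LaurentPolynomial in
lemma sl_toLaurent {F : Type*} [Field F] (σ : F ≃+* F) (α : F)
    (σl : LaurentPolynomial F ≃+* LaurentPolynomial F)
    (hlC : ∀ a : F, σl (LaurentPolynomial.C a) = LaurentPolynomial.C (σ a))
    (hlT : σl (T 1) = LaurentPolynomial.C α * T 1) (p : Polynomial F) :
    σl (Polynomial.toLaurent p) = Polynomial.toLaurent (sp σ α p) := by
  induction p using Polynomial.induction_on' with
  | add p q hp hq => simp only [map_add, hp, hq]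
  | monomial n a =>
      rw [sp_monomial, ← Polynomial.C_mul_X_pow_eq_monomial, ← Polynomial.C_mul_X_pow_eq_monomial,
        Polynomial.toLaurent_C_mul_X_pow, Polynomial.toLaurent_C_mul_X_pow,
        map_mul, hlC, sl_T_nat σ α σl hlT n, map_mul]
      ring

lemma sr_algebraMap {F : Type*} [Field F] (σ : F ≃+* F) (α : F)
    (σr : RatFunc F ≃+* RatFunc F)
    (hrC : ∀ a : F, σr (RatFunc.C a) = RatFunc.C (σ a))
    (hrX : σr RatFunc.X = RatFunc.C α * RatFunc.X) (p : Polynomial F) :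
    σr (algebraMap (Polynomial F) (RatFunc F) p)
      = algebraMap (Polynomial F) (RatFunc F) (sp σ α p) := by
  induction p using Polynomial.induction_on' with
  | add p q hp hq => simp only [map_add, hp, hq]
  | monomial n a =>
      rw [sp_monomial]
      simp only [← Polynomial.C_mul_X_pow_eq_monomial, map_mul, map_pow,
        RatFunc.algebraMap_C, RatFunc.algebraMap_X, hrC, hrX, mul_pow]
      ring

open LaurentPolynomial in
lemma CT_eq_C {F : Type*} [Field F] {a c : F} {n : ℤ}
    (h : LaurentPolynomial.C a * T n = LaurentPolynomial.C c) (ha : a ≠ 0) :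
    n = 0 ∧ a = c := by
  have h' : (AddMonoidAlgebra.single n a : LaurentPolynomial F) = AddMonoidAlgebra.single (0 : ℤ) c := by
    rw [single_eq_C_mul_T, single_eq_C_mul_T, T_zero, mul_one, h]
  rcases (Finsupp.single_eq_single_iff _ _ _ _).mp (by simpa only [AddMonoidAlgebra.coeff_single] using congrArg AddMonoidAlgebra.coeff h') with ⟨h1, h2⟩ | ⟨h1, _⟩
  · exact ⟨h1, h2⟩
  · exact absurd h1 ha

open LaurentPolynomial in
lemma semiinv_coeff_eq {F : Type*} [Field F] (σ : F ≃+* F) (α : F) (hα : α ≠ 0)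
    (σl : LaurentPolynomial F ≃+* LaurentPolynomial F)
    (hlC : ∀ a : F, σl (LaurentPolynomial.C a) = LaurentPolynomial.C (σ a))
    (hlT : σl (T 1) = LaurentPolynomial.C α * T 1)
    (hl : ∀ f : LaurentPolynomial F, σl f = f →
        ∃ c : F, σ c = c ∧ f = LaurentPolynomial.C c)
    {u : F} {r : Polynomial F} (hr : sp σ α r = Polynomial.C u * r)
    {k j : ℕ} (hk : r.coeff k ≠ 0) (hj : r.coeff j ≠ 0) : k = j := by
  set ak := r.coeff k
  set aj := r.coeff j
  have e1 : σ ak * α ^ k = u * ak := by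
    have := congrArg (fun s => Polynomial.coeff s k) hr
    simpa [sp_coeff, Polynomial.coeff_C_mul] using this
  have e2 : σ aj * α ^ j = u * aj := by
    have := congrArg (fun s => Polynomial.coeff s j) hr
    simpa [sp_coeff, Polynomial.coeff_C_mul] using this
  have hσaj : σ aj ≠ 0 := fun h => hj (by simpa using σ.injective (h.trans (map_zero σ).symm))
  have hu : u ≠ 0 := by
    intro h
    rw [h, zero_mul] at e2
    exact (mul_ne_zero hσaj (pow_ne_zero j hα)) e2
  have key : σ (ak * aj⁻¹) * α ^ ((k : ℤ) - (j : ℤ)) = ak * aj⁻¹ := by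
    rw [map_mul, map_inv₀, zpow_sub₀ hα, zpow_natCast, zpow_natCast]
    field_simp
    linear_combination aj * e1 - ak * e2
  have hg : σl (LaurentPolynomial.C (ak * aj⁻¹) * T ((k : ℤ) - (j : ℤ)))
      = LaurentPolynomial.C (ak * aj⁻¹) * T ((k : ℤ) - (j : ℤ)) := by
    rw [map_mul, hlC, sl_T σ α hα σl hlT, ← mul_assoc, ← map_mul, key]
  obtain ⟨c, -, hc⟩ := hl _ hg
  have := (CT_eq_C hc (mul_ne_zero hk (inv_ne_zero hj))).1
  have : (k : ℤ) = (j : ℤ) := by omega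
  exact_mod_cast this

lemma eq_C_mul_X_pow_of {F : Type*} [Field F] {r : Polynomial F}
    (h : ∀ k j : ℕ, r.coeff k ≠ 0 → r.coeff j ≠ 0 → k = j) :
    r = Polynomial.C r.leadingCoeff * Polynomial.X ^ r.natDegree := by
  ext i
  rw [Polynomial.coeff_C_mul, Polynomial.coeff_X_pow]
  by_cases hi : i = r.natDegree
  · subst hi; rw [if_pos rfl, mul_one]; rfl
  · simp only [hi, if_false, mul_zero]
    by_contra hne
    by_cases hr0 : r = 0
    · exact hne (by simp [hr0])
    · exact hi (h i r.natDegree hne (Polynomial.leadingCoeff_ne_zero.mpr hr0))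

open LaurentPolynomial

/-- Let `(F,σ)` be a difference field of characteristic 0 and `α ∈ F*`.
Let `F[t,t⁻¹]` be the P-extension with `σ(t) = α·t` and `F(t)` the rational function
field with the unique extension of `σ` with `σ(t) = α·t`. Then
`const(F[t,t⁻¹],σ) = const(F,σ)` iff `const(F(t),σ) = const(F,σ)`. -/
theorem stmt4 {F : Type*} [Field F] [CharZero F]
    (σ : F ≃+* F) (α : F) (hα : α ≠ 0)
    (σl : LaurentPolynomial F ≃+* LaurentPolynomial F)
    (hlC : ∀ a : F, σl (LaurentPolynomial.C a) = LaurentPolynomial.C (σ a))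
    (hlT : σl (LaurentPolynomial.T 1) =
        LaurentPolynomial.C α * LaurentPolynomial.T 1)
    (σr : RatFunc F ≃+* RatFunc F)
    (hrC : ∀ a : F, σr (RatFunc.C a) = RatFunc.C (σ a))
    (hrX : σr RatFunc.X = RatFunc.C α * RatFunc.X) :
    (∀ f : LaurentPolynomial F, σl f = f →
        ∃ c : F, σ c = c ∧ f = LaurentPolynomial.C c) ↔
      (∀ f : RatFunc F, σr f = f → ∃ c : F, σ c = c ∧ f = RatFunc.C c) := by
  constructor
  · -- Laurent constants trivial → rational constants trivial
    intro hl f hf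
    by_cases hf0 : f = 0
    · exact ⟨0, by simp, by simp [hf0]⟩
    have hq : f.denom ≠ 0 := f.denom_ne_zero
    have hp0 : f.num ≠ 0 := RatFunc.num_ne_zero hf0
    have cop : IsCoprime f.num f.denom := f.isCoprime_num_denom
    have hfe : algebraMap (Polynomial F) (RatFunc F) f.num
        / algebraMap (Polynomial F) (RatFunc F) f.denom = f := f.num_div_denom
    have hspq0 : sp σ α f.denom ≠ 0 := fun h =>
      hq (sp_injective σ α hα (show sp σ α f.denom = sp σ α 0 by simpa using h))
    have haq : algebraMap (Polynomial F) (RatFunc F) f.denom ≠ 0 :=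
      RatFunc.algebraMap_ne_zero hq
    have haspq : algebraMap (Polynomial F) (RatFunc F) (sp σ α f.denom) ≠ 0 :=
      RatFunc.algebraMap_ne_zero hspq0
    have step : algebraMap (Polynomial F) (RatFunc F) (sp σ α f.num)
        / algebraMap (Polynomial F) (RatFunc F) (sp σ α f.denom)
        = algebraMap (Polynomial F) (RatFunc F) f.num
          / algebraMap (Polynomial F) (RatFunc F) f.denom := by
      rw [← sr_algebraMap σ α σr hrC hrX, ← sr_algebraMap σ α σr hrC hrX, ← map_div₀, hfe, hf]
    have cross : sp σ α f.num * f.denom = f.num * sp σ α f.denom := by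
      apply RatFunc.algebraMap_injective
      rw [map_mul, map_mul]
      exact (div_eq_div_iff haspq haq).mp step
    have copσ : IsCoprime (sp σ α f.num) (sp σ α f.denom) := cop.map (sp σ α)
    have dvd1 : sp σ α f.denom ∣ f.denom :=
      copσ.symm.dvd_of_dvd_mul_left ⟨f.num, by rw [cross]; ring⟩
    have dvd2 : f.denom ∣ sp σ α f.denom :=
      cop.symm.dvd_of_dvd_mul_left ⟨sp σ α f.num, by rw [← cross]; ring⟩
    obtain ⟨v, hv⟩ := associated_of_dvd_dvd dvd2 dvd1
    obtain ⟨u, -, hu⟩ := Polynomial.isUnit_iff.mp v.isUnit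
    have hsq : sp σ α f.denom = Polynomial.C u * f.denom := by
      rw [← hv, ← hu]; ring
    have hsp : sp σ α f.num = Polynomial.C u * f.num := by
      apply mul_right_cancel₀ hq
      rw [cross, hsq]; ring
    have pm := eq_C_mul_X_pow_of (r := f.num)
      (fun k j hk hj => semiinv_coeff_eq σ α hα σl hlC hlT hl hsp hk hj)
    have qm := eq_C_mul_X_pow_of (r := f.denom)
      (fun k j hk hj => semiinv_coeff_eq σ α hα σl hlC hlT hl hsq hk hj)
    have hq1 : f.denom.leadingCoeff = 1 := f.monic_denom
    have ha0 : f.num.leadingCoeff ≠ 0 := Polynomial.leadingCoeff_ne_zero.mpr hp0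
    -- coefficient relations at the top degrees
    have em : σ f.num.leadingCoeff * α ^ f.num.natDegree = u * f.num.leadingCoeff := by
      have := congrArg (fun s => Polynomial.coeff s f.num.natDegree) hsp
      simp only [sp_coeff, Polynomial.coeff_C_mul] at this
      exact this
    have en : α ^ f.denom.natDegree = u := by
      have := congrArg (fun s => Polynomial.coeff s f.denom.natDegree) hsq
      simp only [sp_coeff, Polynomial.coeff_C_mul] at this
      have h1 : f.denom.coeff f.denom.natDegree = 1 := hq1
      rw [h1, map_one, one_mul, mul_one] at this
      exact this
    have key : σ f.num.leadingCoeff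
        * α ^ ((f.num.natDegree : ℤ) - (f.denom.natDegree : ℤ)) = f.num.leadingCoeff := by
      rw [zpow_sub₀ hα, zpow_natCast, zpow_natCast]
      field_simp
      linear_combination em - f.num.leadingCoeff * en
    have hg : σl (LaurentPolynomial.C f.num.leadingCoeff
        * T ((f.num.natDegree : ℤ) - (f.denom.natDegree : ℤ)))
        = LaurentPolynomial.C f.num.leadingCoeff
          * T ((f.num.natDegree : ℤ) - (f.denom.natDegree : ℤ)) := by
      rw [map_mul, hlC, sl_T σ α hα σl hlT, ← mul_assoc, ← map_mul, key]
    obtain ⟨c, hc, hcg⟩ := hl _ hg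
    obtain ⟨hdeg, hac⟩ := CT_eq_C hcg ha0
    have hmn : f.num.natDegree = f.denom.natDegree := by omega
    refine ⟨f.num.leadingCoeff, by rw [hac, hc, ← hac], ?_⟩
    have hXn : (RatFunc.X : RatFunc F) ^ f.denom.natDegree ≠ 0 :=
      pow_ne_zero _ RatFunc.X_ne_zero
    conv_lhs => rw [← hfe, pm, qm, hq1, hmn]
    simp only [map_mul, map_pow, map_one, one_mul, RatFunc.algebraMap_C, RatFunc.algebraMap_X]
    rw [mul_div_assoc, div_self hXn, mul_one]
  · -- rational constants trivial → Laurent constants trivial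
    intro hr f hf
    obtain ⟨n, p, hp⟩ := f.exists_T_pow
    have h1 : σl (Polynomial.toLaurent p) = LaurentPolynomial.C (α ^ n)
        * Polynomial.toLaurent p := by
      rw [hp, map_mul, hf, sl_T_nat σ α σl hlT n]
      ring
    have h2 : sp σ α p = Polynomial.C (α ^ n) * p := by
      apply Polynomial.toLaurent_injective
      rw [← sl_toLaurent σ α σl hlC hlT, h1, map_mul, Polynomial.toLaurent_C]
    have hCα : (RatFunc.C α : RatFunc F) ≠ 0 := by
      intro h
      exact hα (RatFunc.C.injective (by simpa using h))
    have hCαn : (RatFunc.C α : RatFunc F) ^ n ≠ 0 := pow_ne_zero _ hCα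
    have hσrg : σr (algebraMap (Polynomial F) (RatFunc F) p / RatFunc.X ^ n)
        = algebraMap (Polynomial F) (RatFunc F) p / RatFunc.X ^ n := by
      rw [map_div₀, map_pow, hrX, sr_algebraMap σ α σr hrC hrX, h2, map_mul, mul_pow,
        RatFunc.algebraMap_C, map_pow]
      exact mul_div_mul_left _ _ hCαn
    obtain ⟨c, hc, hgc⟩ := hr _ hσrg
    have hXn : (RatFunc.X : RatFunc F) ^ n ≠ 0 := pow_ne_zero _ RatFunc.X_ne_zero
    have hp2 : p = Polynomial.C c * Polynomial.X ^ n := by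
      apply RatFunc.algebraMap_injective
      rw [map_mul, map_pow, RatFunc.algebraMap_C, RatFunc.algebraMap_X]
      rw [div_eq_iff hXn] at hgc
      exact hgc
    refine ⟨c, hc, ?_⟩
    have h3 : f * T (n : ℤ) = LaurentPolynomial.C c * T (n : ℤ) := by
      rw [← hp, hp2, map_mul, map_pow, Polynomial.toLaurent_C, Polynomial.toLaurent_X]
      rw [T_pow]
      norm_num
    have := congrArg (· * T (-(n : ℤ))) h3
    simpa using this
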